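/- Let A: 𝓘 × ℕ → ℝ≥0 (where 𝓘 is the set of finitely supported multiindices) satisfy A(ν,0) = δ_{ν,0}, A(ν,λ) = 0 for λ > |ν|, and the recursion A(ν+e_j, λ) = R ∑_{m ≤ ν} C(ν,m) β^{ν−m+e_j} Γ_{|ν−m|+1} A(m, λ−1) for all ν ∈ 𝓘, j ≥ 1, 1 ≤ λ ≤ |ν|+1, where R > 0, (β_j) and (Γ_n) are positive sequences. Then for all ν ≠ 0 and 1 ≤ λ ≤ |ν|, A(ν,λ) = R^λ β^ν B(|ν|, λ), where B(n,1) = Γ_n and B(n,λ) = ∑_{i=λ−1}^{n−1} C(n−1,i) Γ_{n−i} B(i, λ−1). -/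

import Mathlib

open Finset

/-- The order `|ν| = ∑_j ν_j` of a finitely supported multiindex. -/
def mdeg (ν : ℕ →₀ ℕ) : ℕ := ν.sum fun _ k => k

/-- `β^ν = ∏_j β_j^{ν_j}`. -/
def bpow (β : ℕ → ℝ) (ν : ℕ →₀ ℕ) : ℝ := ν.prod fun j k => β j ^ k

/-- `C(ν,m) = ∏_j C(ν_j, m_j)` for multiindices. -/
def mchoose (ν m : ℕ →₀ ℕ) : ℕ := ∏ j ∈ ν.support, (ν j).choose (m j)

/-- The recursively defined sequence `B(n,λ)`:
`B(n,1) = Γ_n`, `B(n,λ) = ∑_{i=λ−1}^{n−1} C(n−1,i) Γ_{n−i} B(i, λ−1)`. -/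
noncomputable def Bseq (Γ : ℕ → ℝ) : ℕ → ℕ → ℝ
  | _, 0 => 0
  | n, 1 => Γ n
  | n, (l + 2) =>
      ∑ i ∈ Finset.Icc (l + 1) (n - 1), ((n - 1).choose i : ℝ) * Γ (n - i) * Bseq Γ i (l + 1)

lemma mdeg_add (ν μ : ℕ →₀ ℕ) : mdeg (ν + μ) = mdeg ν + mdeg μ :=
  Finsupp.sum_add_index' (fun _ => rfl) (fun _ _ _ => rfl)

lemma mdeg_single (j k : ℕ) : mdeg (Finsupp.single j k) = k :=
  Finsupp.sum_single_index rfl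

lemma mdeg_eq_zero {ν : ℕ →₀ ℕ} : mdeg ν = 0 ↔ ν = 0 := by
  unfold mdeg Finsupp.sum
  rw [Finset.sum_eq_zero_iff]
  constructor
  · intro h; ext a
    by_cases ha : a ∈ ν.support
    · exact h a ha
    · simpa using Finsupp.notMem_support_iff.mp ha
  · intro h; subst h; simp

lemma mdeg_mono {m ν : ℕ →₀ ℕ} (h : m ≤ ν) : mdeg m ≤ mdeg ν := by
  have h2 := tsub_add_cancel_of_le h
  calc mdeg m ≤ mdeg (ν - m) + mdeg m := Nat.le_add_left _ _
    _ = mdeg (ν - m + m) := (mdeg_add _ _).symm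
    _ = mdeg ν := by rw [h2]

lemma mdeg_tsub {m ν : ℕ →₀ ℕ} (h : m ≤ ν) : mdeg (ν - m) = mdeg ν - mdeg m := by
  have h2 := tsub_add_cancel_of_le h
  have := mdeg_add (ν - m) m
  rw [h2] at this
  omega

lemma bpow_add (β : ℕ → ℝ) (ν μ : ℕ →₀ ℕ) : bpow β (ν + μ) = bpow β ν * bpow β μ :=
  Finsupp.prod_add_index' (fun _ => pow_zero _) (fun _ _ _ => pow_add _ _ _)

lemma bpow_single (β : ℕ → ℝ) (j : ℕ) : bpow β (Finsupp.single j 1) = β j := by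
  simp [bpow]

lemma bpow_tsub_mul (β : ℕ → ℝ) {m ν : ℕ →₀ ℕ} (h : m ≤ ν) :
    bpow β (ν - m) * bpow β m = bpow β ν := by
  rw [← bpow_add, tsub_add_cancel_of_le h]

lemma mchoose_zero_right (ν : ℕ →₀ ℕ) : mchoose ν 0 = 1 := by simp [mchoose]

lemma sum_Iic_single_add {M : Type*} [AddCommMonoid M] (a b : ℕ) (f : ℕ →₀ ℕ)
    (ha : f a = 0) (g : (ℕ →₀ ℕ) → M) :
    ∑ m ∈ Finset.Iic (Finsupp.single a b + f), g m
      = ∑ c ∈ Finset.range (b + 1), ∑ m' ∈ Finset.Iic f, g (Finsupp.single a c + m') := by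
  rw [← Finset.sum_product']
  refine Finset.sum_nbij' (fun m => (m a, m.erase a))
    (fun p => Finsupp.single a p.1 + p.2) ?_ ?_ ?_ ?_ ?_
  · intro m hm
    rw [Finset.mem_Iic, Finsupp.le_def] at hm
    rw [Finset.mem_product, Finset.mem_range, Finset.mem_Iic, Finsupp.le_def]
    dsimp only
    constructor
    · have := hm a
      simp [Finsupp.single_apply, ha] at this
      omega
    · intro i
      by_cases hia : i = a
      · simp [hia]
      · have := hm i
        simpa [Finsupp.erase_ne hia, Finsupp.single_apply, Ne.symm hia] using this
  · intro p hp
    rw [Finset.mem_product, Finset.mem_range, Finset.mem_Iic, Finsupp.le_def] at hp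
    rw [Finset.mem_Iic, Finsupp.le_def]
    have h1 := hp.1
    intro i
    have h2 := hp.2 i
    simp only [Finsupp.add_apply, Finsupp.single_apply]
    by_cases hai : a = i
    · subst hai
      have h2a := hp.2 a
      simp only [eq_self_iff_true, if_true, ha] at *
      omega
    · simp only [if_neg hai]
      omega
  · intro m _
    exact Finsupp.single_add_erase a m
  · intro p hp
    rw [Finset.mem_product, Finset.mem_range, Finset.mem_Iic, Finsupp.le_def] at hp
    obtain ⟨c, m'⟩ := p
    have hm'a : m' a = 0 := by have := hp.2 a; simp [ha] at this; omega
    dsimp only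
    rw [Prod.mk.injEq]
    refine ⟨by simp [hm'a], ?_⟩
    rw [Finsupp.erase_add, Finsupp.erase_single, zero_add]
    ext i
    by_cases hia : i = a
    · simp [hia, hm'a]
    · simp [Finsupp.erase_ne hia]
  · intro m _
    rw [Finsupp.single_add_erase a m]

lemma mchoose_single_add {a b c : ℕ} {f m' : ℕ →₀ ℕ} (ha : f a = 0) (hm : m' a = 0)
    (hb : b ≠ 0) :
    mchoose (Finsupp.single a b + f) (Finsupp.single a c + m') = b.choose c * mchoose f m' := by
  classical
  have hsupp : (Finsupp.single a b + f).support = {a} ∪ f.support := by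
    rw [Finsupp.support_add_eq, Finsupp.support_single_ne_zero a hb]
    rw [Finsupp.support_single_ne_zero a hb]
    simp [Finset.disjoint_singleton_left, Finsupp.mem_support_iff, ha]
  have hnotmem : a ∉ f.support := by simp [Finsupp.mem_support_iff, ha]
  rw [mchoose, hsupp, Finset.prod_union (by simpa [Finset.disjoint_singleton_left])]
  congr 1
  · simp [Finsupp.single_apply, ha, hm]
  · apply Finset.prod_congr rfl
    intro i hi
    have hia : i ≠ a := by rintro rfl; exact hnotmem hi
    simp [mchoose, Finsupp.single_apply, Ne.symm hia]

lemma sum_mchoose (ν : ℕ →₀ ℕ) (i : ℕ) :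
    ∑ m ∈ Finset.Iic ν, (if mdeg m = i then mchoose ν m else 0) = (mdeg ν).choose i := by
  induction ν using Finsupp.induction generalizing i with
  | zero =>
    have : Finset.Iic (0 : ℕ →₀ ℕ) = {0} := by
      ext m; simp [le_zero_iff]
    rw [this]
    simp only [Finset.sum_singleton, mchoose_zero_right]
    rcases i with _ | i <;> simp [mdeg_eq_zero, mdeg, Nat.choose_zero_right]
  | single_add a b f hf hb IH =>
    have hfa : f a = 0 := Finsupp.notMem_support_iff.mp hf
    rw [sum_Iic_single_add a b f hfa]
    have step : ∀ c ∈ Finset.range (b + 1),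
        (∑ m' ∈ Finset.Iic f,
          (if mdeg (Finsupp.single a c + m') = i
            then mchoose (Finsupp.single a b + f) (Finsupp.single a c + m') else 0))
        = if c ≤ i then b.choose c * (mdeg f).choose (i - c) else 0 := by
      intro c _
      have key : ∀ m' ∈ Finset.Iic f,
          (if mdeg (Finsupp.single a c + m') = i
            then mchoose (Finsupp.single a b + f) (Finsupp.single a c + m') else 0)
          = (if c + mdeg m' = i then b.choose c * mchoose f m' else 0) := by
        intro m' hm'
        have hm'a : m' a = 0 := by
          rw [Finset.mem_Iic, Finsupp.le_def] at hm'
          have := hm' a; omega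
        rw [mdeg_add, mdeg_single, mchoose_single_add hfa hm'a hb]
      rw [Finset.sum_congr rfl key]
      by_cases hci : c ≤ i
      · rw [if_pos hci]
        have : ∀ m' : ℕ →₀ ℕ, (c + mdeg m' = i) = (mdeg m' = i - c) := by
          intro m'; simp only [eq_iff_iff]; omega
        simp only [this]
        have e : (∑ x ∈ Finset.Iic f, if mdeg x = i - c then (b.choose c) * mchoose f x else 0)
            = b.choose c * ∑ x ∈ Finset.Iic f, (if mdeg x = i - c then mchoose f x else 0) := by
          rw [Finset.mul_sum]
          apply Finset.sum_congr rfl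
          intro x _
          split <;> simp
        rw [e, IH (i - c)]
      · rw [if_neg hci]
        apply Finset.sum_eq_zero
        intro m' _
        rw [if_neg (by omega)]
    rw [Finset.sum_congr rfl step]
    have hdeg : mdeg (Finsupp.single a b + f) = b + mdeg f := by
      rw [mdeg_add, mdeg_single]
    rw [hdeg, Nat.add_choose_eq, Finset.Nat.sum_antidiagonal_eq_sum_range_succ_mk]
    set h : ℕ → ℕ := fun c => if c ≤ i then b.choose c * (mdeg f).choose (i - c) else 0 with hh
    have h1 : ∑ c ∈ Finset.range (b + 1), h c = ∑ c ∈ Finset.range (b + i + 2), h c := by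
      apply Finset.sum_subset
      · apply Finset.range_subset_range.mpr; omega
      · intro c _ hc
        rw [Finset.mem_range, not_lt] at hc
        simp only [hh]
        split
        · rw [Nat.choose_eq_zero_of_lt (show b < c by omega), zero_mul]
        · rfl
    have h2 : ∑ c ∈ Finset.range (i + 1), b.choose c * (mdeg f).choose (i - c)
        = ∑ c ∈ Finset.range (b + i + 2), h c := by
      have e1 : ∑ c ∈ Finset.range (i + 1), b.choose c * (mdeg f).choose (i - c)
          = ∑ c ∈ Finset.range (i + 1), h c := by
        apply Finset.sum_congr rfl
        intro c hc
        rw [Finset.mem_range] at hc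
        simp only [hh]
        rw [if_pos (by omega)]
      rw [e1]
      apply Finset.sum_subset (Finset.range_subset_range.mpr (by omega))
      intro c _ hc
      rw [Finset.mem_range, not_lt] at hc
      simp only [hh]
      rw [if_neg (by omega)]
    rw [h1, h2]

lemma sum_mchoose_filter (ν : ℕ →₀ ℕ) (i : ℕ) :
    ∑ m ∈ (Finset.Iic ν).filter (fun m => mdeg m = i), mchoose ν m = (mdeg ν).choose i := by
  rw [Finset.sum_filter]; exact sum_mchoose ν i

/-- Lemma on the sharp recursion for the non-periodic DNN: if `A` satisfies the stated
recursion, then `A(ν,λ) = R^λ β^ν B(|ν|, λ)` for all `ν ≠ 0` and `1 ≤ λ ≤ |ν|`. -/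
theorem recursion_nonperiodic
    (R : ℝ) (hR : 0 < R) (β : ℕ → ℝ) (hβ : ∀ j, 0 < β j)
    (Γ : ℕ → ℝ) (hΓ : ∀ n, 0 < Γ n)
    (A : (ℕ →₀ ℕ) → ℕ → ℝ)
    (hAnonneg : ∀ ν lam, 0 ≤ A ν lam)
    (hA0 : ∀ ν, A ν 0 = if ν = 0 then 1 else 0)
    (hAzero : ∀ ν lam, mdeg ν < lam → A ν lam = 0)
    (hrec : ∀ (ν : ℕ →₀ ℕ) (j : ℕ) (lam : ℕ), 1 ≤ lam → lam ≤ mdeg ν + 1 →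
      A (ν + Finsupp.single j 1) lam
        = R * ∑ m ∈ Finset.Iic ν,
            (mchoose ν m : ℝ) * bpow β (ν - m + Finsupp.single j 1)
              * Γ (mdeg (ν - m) + 1) * A m (lam - 1)) :
    ∀ (ν : ℕ →₀ ℕ) (lam : ℕ), ν ≠ 0 → 1 ≤ lam → lam ≤ mdeg ν →
      A ν lam = R ^ lam * bpow β ν * Bseq Γ (mdeg ν) lam := by
  intro ν lam
  induction lam generalizing ν with
  | zero => intro _ h1 _; omega
  | succ l IH =>
    intro hν h1 h2
    obtain ⟨j, hj⟩ := Finsupp.support_nonempty_iff.mpr hν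
    have hle : Finsupp.single j 1 ≤ ν :=
      Finsupp.single_le_iff.mpr (Nat.one_le_iff_ne_zero.mpr (Finsupp.mem_support_iff.mp hj))
    set μ := ν - Finsupp.single j 1 with hμdef
    have hμ : μ + Finsupp.single j 1 = ν := tsub_add_cancel_of_le hle
    have hdeg : mdeg ν = mdeg μ + 1 := by rw [← hμ, mdeg_add, mdeg_single]
    have hA := hrec μ j (l + 1) (by omega) (by omega)
    simp only [Nat.add_sub_cancel] at hA
    rw [hμ] at hA
    rw [hA]
    cases l with
    | zero =>
      rw [Finset.sum_eq_single_of_mem (0 : ℕ →₀ ℕ) (Finset.mem_Iic.mpr zero_le)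
        (fun b _ hb => by rw [hA0, if_neg hb, mul_zero])]
      rw [hA0, if_pos rfl, mchoose_zero_right, tsub_zero, hμ, ← hdeg]
      simp [Bseq]
      ring
    | succ k =>
      have hmaps : ∀ m ∈ Finset.Iic μ, mdeg m ∈ Finset.range (mdeg μ + 1) :=
        fun m hm => Finset.mem_range.mpr (Nat.lt_succ_of_le (mdeg_mono (Finset.mem_Iic.mp hm)))
      have hfib := Finset.sum_fiberwise_of_maps_to hmaps
        (fun m => (mchoose μ m : ℝ) * bpow β (μ - m + Finsupp.single j 1)
          * Γ (mdeg (μ - m) + 1) * A m (k + 1))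
      rw [← hfib]
      have inner : ∀ i ∈ Finset.range (mdeg μ + 1),
          (∑ m ∈ (Finset.Iic μ).filter (fun m => mdeg m = i),
            (mchoose μ m : ℝ) * bpow β (μ - m + Finsupp.single j 1)
              * Γ (mdeg (μ - m) + 1) * A m (k + 1))
          = if k + 1 ≤ i then
              ((mdeg μ).choose i : ℝ) * (Γ (mdeg μ - i + 1) * Bseq Γ i (k + 1)
                * (R ^ (k + 1) * bpow β μ * β j))
            else 0 := by
        intro i hi
        rw [Finset.mem_range] at hi
        by_cases hki : k + 1 ≤ i
        · rw [if_pos hki]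
          have hterm : ∀ m ∈ (Finset.Iic μ).filter (fun m => mdeg m = i),
              (mchoose μ m : ℝ) * bpow β (μ - m + Finsupp.single j 1)
                * Γ (mdeg (μ - m) + 1) * A m (k + 1)
              = (mchoose μ m : ℝ) * (Γ (mdeg μ - i + 1) * Bseq Γ i (k + 1)
                  * (R ^ (k + 1) * bpow β μ * β j)) := by
            intro m hm
            rw [Finset.mem_filter, Finset.mem_Iic] at hm
            obtain ⟨hmle, hmdeg⟩ := hm
            have hm0 : m ≠ 0 := by
              intro h
              rw [h] at hmdeg
              have : mdeg (0 : ℕ →₀ ℕ) = 0 := rfl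
              omega
            have hAm := IH m hm0 (by omega) (by omega)
            rw [hAm, hmdeg, bpow_add, bpow_single, mdeg_tsub hmle, hmdeg]
            rw [← bpow_tsub_mul β hmle]
            ring
          rw [Finset.sum_congr rfl hterm, ← Finset.sum_mul]
          have hcast : (∑ m ∈ (Finset.Iic μ).filter (fun m => mdeg m = i), (mchoose μ m : ℝ))
              = ((mdeg μ).choose i : ℝ) := by
            rw [← Nat.cast_sum, sum_mchoose_filter]
          rw [hcast]
        · rw [if_neg hki]
          apply Finset.sum_eq_zero
          intro m hm
          rw [Finset.mem_filter] at hm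
          rw [hAzero m (k + 1) (by omega), mul_zero]
      rw [Finset.sum_congr rfl inner]
      have hsub : Finset.Icc (k + 1) (mdeg μ) ⊆ Finset.range (mdeg μ + 1) := by
        intro x hx
        rw [Finset.mem_Icc] at hx
        rw [Finset.mem_range]
        omega
      rw [← Finset.sum_subset hsub (by
        intro x hx hxn
        rw [Finset.mem_range] at hx
        rw [Finset.mem_Icc] at hxn
        rw [if_neg (by omega)])]
      rw [hdeg, Bseq]
      simp only [Nat.add_sub_cancel]
      rw [← hμ, bpow_add, bpow_single, Finset.mul_sum, Finset.mul_sum]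
      apply Finset.sum_congr rfl
      intro i hi
      rw [Finset.mem_Icc] at hi
      rw [if_pos (by omega)]
      have : mdeg μ + 1 - i = mdeg μ - i + 1 := by omega
      rw [this]
      ring
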